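/- With the notation below, for every nonzero scalar c, the product of the matrices f_1^{(c)}, f_2^{(c)}, …, f_n^{(c)} (in this order) satisfies U · (f_1^{(c)} f_2^{(c)} ⋯ f_n^{(c)}) = −c · Uᵀ; equivalently, since U is invertible, f_1^{(c)} f_2^{(c)} ⋯ f_n^{(c)} = −c · U⁻¹ Uᵀ. -/

import Mathlib

open Matrix

noncomputable section

/-- The strictly upper-triangular part `A⁺` of a matrix `A`. -/
def Aplus (n : ℕ) (A : Matrix (Fin n) (Fin n) ℝ) : Matrix (Fin n) (Fin n) ℝ :=
  fun i j => if i < j then A i j else 0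

/-- `U = I_s − A⁺`. -/
def Umat (n : ℕ) (A : Matrix (Fin n) (Fin n) ℝ) (s : Fin n → ℝ) :
    Matrix (Fin n) (Fin n) ℝ :=
  Matrix.diagonal s - Aplus n A

/-- The matrix `f_i^{(c)}`. -/
def fMat (n : ℕ) (A : Matrix (Fin n) (Fin n) ℝ) (s : Fin n → ℝ) (c : ℝ) (i : Fin n) :
    Matrix (Fin n) (Fin n) ℝ :=
  fun j k =>
    if j = i then
      (if k = i then -c else if i < k then s i * A i k else c * s i * A i k)
    else (if j = k then 1 else 0)

/-- intermediate matrix in the inductive computation -/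
def Qmat (n : ℕ) (A : Matrix (Fin n) (Fin n) ℝ) (s : Fin n → ℝ) (c : ℝ) (k : ℕ) :
    Matrix (Fin n) (Fin n) ℝ :=
  fun i j =>
    if i.val < k ∧ j.val < k then -c * Umat n A s j i
    else if k ≤ i.val ∧ k ≤ j.val then Umat n A s i j
    else 0

lemma Umat_apply (n : ℕ) (A : Matrix (Fin n) (Fin n) ℝ) (s : Fin n → ℝ) (i j : Fin n) :
    Umat n A s i j = if i = j then s i else if i < j then -A i j else 0 := by
  rcases lt_trichotomy i j with h | h | h
  · simp [Umat, Aplus, Matrix.diagonal, h, h.ne]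
  · simp [Umat, Aplus, h, lt_irrefl]
  · simp [Umat, Aplus, Matrix.diagonal, h.ne', not_lt.mpr h.le, h.not_gt]

lemma mul_f_apply (n : ℕ) (A : Matrix (Fin n) (Fin n) ℝ) (s : Fin n → ℝ) (c : ℝ)
    (k : Fin n) (M : Matrix (Fin n) (Fin n) ℝ) (i j : Fin n) :
    (M * fMat n A s c k) i j =
      if j = k then M i k * (-c)
      else M i j + M i k * fMat n A s c k k j := by
  rw [Matrix.mul_apply]
  rw [Finset.sum_eq_add_sum_sdiff_singleton_of_mem (Finset.mem_univ k)
    (fun l => M i l * fMat n A s c k l j)]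
  have hsum : ∑ l ∈ Finset.univ \ {k}, M i l * fMat n A s c k l j
      = if j = k then 0 else M i j := by
    have : ∀ l ∈ Finset.univ \ {k}, M i l * fMat n A s c k l j
        = if l = j then M i l else 0 := by
      intro l hl
      simp only [Finset.mem_sdiff, Finset.mem_singleton] at hl
      simp only [fMat, if_neg hl.2]
      split <;> simp
    rw [Finset.sum_congr rfl this, Finset.sum_ite_eq' (Finset.univ \ {k}) j (fun l => M i l)]
    by_cases hj : j = k
    · simp [hj]
    · simp [hj]
  rw [hsum]
  by_cases hj : j = k
  · subst hj; simp [fMat]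
  · simp only [if_neg hj, fMat, if_pos rfl, if_neg hj]
    ring

lemma Q_step (n : ℕ) (A : Matrix (Fin n) (Fin n) ℝ)
    (hsym : ∀ i j, A i j = A j i)
    (s : Fin n → ℝ) (hs : ∀ i, s i = 1 ∨ s i = -1)
    (c : ℝ) (k : Fin n) :
    Qmat n A s c k.val * fMat n A s c k = Qmat n A s c (k.val + 1) := by
  have hss : ∀ i, s i * s i = 1 := by
    intro i; rcases hs i with h | h <;> rw [h] <;> ring
  have hQcol : ∀ i : Fin n, Qmat n A s c k.val i k = if i = k then s k else 0 := by
    intro i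
    rcases Nat.lt_trichotomy i.val k.val with h | h | h
    · have hik : i ≠ k := fun e => absurd (congrArg Fin.val e) (by omega)
      rw [Qmat, if_neg (by omega), if_neg (by omega), if_neg hik]
    · have hik : i = k := Fin.ext h
      rw [Qmat, if_neg (by omega), if_pos (by omega), if_pos hik, hik, Umat_apply, if_pos rfl]
    · have hik : i ≠ k := fun e => by exact absurd (congrArg Fin.val e) (by omega)
      rw [Qmat, if_neg (by omega), if_pos (by omega), if_neg hik, Umat_apply,
        if_neg hik, if_neg (by rw [Fin.lt_def]; omega)]
  ext i j
  rw [mul_f_apply, hQcol]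
  rcases Nat.lt_trichotomy i.val k.val with hi | hi | hi <;>
  rcases Nat.lt_trichotomy j.val k.val with hj | hj | hj
  · -- i<k, j<k
    have hik : i ≠ k := fun e => absurd (congrArg Fin.val e) (by omega)
    have hjk : j ≠ k := fun e => absurd (congrArg Fin.val e) (by omega)
    rw [if_neg hjk, if_neg hik, zero_mul, add_zero, Qmat, if_pos (by omega),
      Qmat, if_pos (by omega)]
  · -- i<k, j=k
    have hik : i ≠ k := fun e => absurd (congrArg Fin.val e) (by omega)
    have hjk : j = k := Fin.ext hj
    rw [if_pos hjk, if_neg hik, zero_mul, Qmat, if_pos (by omega), hjk, Umat_apply,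
      if_neg (Ne.symm hik), if_neg (by rw [Fin.lt_def]; omega), mul_zero]
  · -- i<k, j>k
    have hik : i ≠ k := fun e => absurd (congrArg Fin.val e) (by omega)
    have hjk : j ≠ k := fun e => absurd (congrArg Fin.val e) (by omega)
    rw [if_neg hjk, if_neg hik, zero_mul, add_zero, Qmat, if_neg (by omega),
      if_neg (by omega), Qmat, if_neg (by omega), if_neg (by omega)]
  · -- i=k, j<k
    have hik : i = k := Fin.ext hi
    have hjk : j ≠ k := fun e => absurd (congrArg Fin.val e) (by omega)
    rw [if_neg hjk, if_pos hik, Qmat, if_neg (by omega), if_neg (by omega), zero_add,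
      fMat, if_pos rfl, if_neg hjk, if_neg (by rw [Fin.lt_def]; omega),
      Qmat, if_pos (by omega), hik, Umat_apply, if_neg hjk,
      if_pos (by rw [Fin.lt_def]; omega), hsym j k]
    linear_combination (c * A k j) * hss k
  · -- i=k, j=k
    have hik : i = k := Fin.ext hi
    have hjk : j = k := Fin.ext hj
    rw [if_pos hjk, if_pos hik, Qmat, if_pos (by omega), hjk, hik, Umat_apply, if_pos rfl]
    ring
  · -- i=k, j>k
    have hik : i = k := Fin.ext hi
    have hjk : j ≠ k := fun e => absurd (congrArg Fin.val e) (by omega)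
    rw [if_neg hjk, if_pos hik, Qmat, if_neg (by omega), if_pos (by omega),
      fMat, if_pos rfl, if_neg hjk, if_pos (by rw [Fin.lt_def]; omega),
      Qmat, if_neg (by omega), if_neg (by omega), hik, Umat_apply,
      if_neg (show k ≠ j from fun e => hjk e.symm), if_pos (show k < j by rw [Fin.lt_def]; omega)]
    linear_combination (A k j) * hss k
  · -- i>k, j<k
    have hik : i ≠ k := fun e => absurd (congrArg Fin.val e) (by omega)
    have hjk : j ≠ k := fun e => absurd (congrArg Fin.val e) (by omega)
    rw [if_neg hjk, if_neg hik, zero_mul, add_zero, Qmat, if_neg (by omega),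
      if_neg (by omega), Qmat, if_neg (by omega), if_neg (by omega)]
  · -- i>k, j=k
    have hik : i ≠ k := fun e => absurd (congrArg Fin.val e) (by omega)
    have hjk : j = k := Fin.ext hj
    rw [if_pos hjk, if_neg hik, zero_mul, Qmat, if_neg (by omega), if_neg (by omega)]
  · -- i>k, j>k
    have hik : i ≠ k := fun e => absurd (congrArg Fin.val e) (by omega)
    have hjk : j ≠ k := fun e => absurd (congrArg Fin.val e) (by omega)
    rw [if_neg hjk, if_neg hik, zero_mul, add_zero, Qmat, if_neg (by omega),
      if_pos (by omega), Qmat, if_neg (by omega), if_pos (by omega)]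

lemma partial_prod (n : ℕ) (A : Matrix (Fin n) (Fin n) ℝ)
    (hsym : ∀ i j, A i j = A j i)
    (s : Fin n → ℝ) (hs : ∀ i, s i = 1 ∨ s i = -1)
    (c : ℝ) (k : ℕ) (hk : k ≤ n) :
    Umat n A s * (((List.finRange n).map (fMat n A s c)).take k).prod
      = Qmat n A s c k := by
  induction k with
  | zero =>
    simp only [List.take_zero, List.prod_nil, mul_one]
    ext i j
    simp [Qmat]
  | succ m ih =>
    have hm : m < n := hk
    have hget : ((List.finRange n).map (fMat n A s c))[m]? = some (fMat n A s c ⟨m, hm⟩) := by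
      rw [List.getElem?_eq_getElem (by simpa using hm)]
      simp
    rw [List.take_succ, hget, List.prod_append, Option.toList_some, List.prod_cons,
      List.prod_nil, mul_one, ← mul_assoc, ih (le_of_lt hm)]
    exact Q_step n A hsym s hs c ⟨m, hm⟩

theorem stmt_0 (n : ℕ) (hn : 1 ≤ n) (A : Matrix (Fin n) (Fin n) ℝ)
    (hsym : ∀ i j, A i j = A j i) (hdiag : ∀ i, A i i = 0)
    (h01 : ∀ i j, A i j = 0 ∨ A i j = 1)
    (s : Fin n → ℝ) (hs : ∀ i, s i = 1 ∨ s i = -1)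
    (c : ℝ) (hc : c ≠ 0) :
    Umat n A s * ((List.finRange n).map (fMat n A s c)).prod = (-c) • (Umat n A s)ᵀ ∧
    ((List.finRange n).map (fMat n A s c)).prod
      = (-c) • ((Umat n A s)⁻¹ * (Umat n A s)ᵀ) := by
  have hlen : ((List.finRange n).map (fMat n A s c)).length = n := by simp
  have h1 : Umat n A s * ((List.finRange n).map (fMat n A s c)).prod
      = (-c) • (Umat n A s)ᵀ := by
    have h := partial_prod n A hsym s hs c n (le_refl n)
    rw [List.take_of_length_le (le_of_eq hlen)] at h
    rw [h]
    ext i j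
    simp [Qmat, i.isLt, j.isLt, Matrix.transpose_apply]
  refine ⟨h1, ?_⟩
  have hut : (Umat n A s).BlockTriangular id := by
    intro i j hij
    simp only [id] at hij
    rw [Umat_apply, if_neg (ne_of_gt hij), if_neg (not_lt.mpr (le_of_lt hij))]
  have hdet : (Umat n A s).det = ∏ i, s i := by
    rw [Matrix.det_of_upperTriangular hut]
    exact Finset.prod_congr rfl fun i _ => by rw [Umat_apply, if_pos rfl]
  have hdet0 : IsUnit (Umat n A s).det := by
    rw [hdet]
    refine (Finset.prod_ne_zero_iff.mpr fun i _ => ?_).isUnit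
    rcases hs i with h | h <;> rw [h] <;> norm_num
  have hinv : (Umat n A s)⁻¹ * Umat n A s = 1 := Matrix.nonsing_inv_mul _ hdet0
  calc ((List.finRange n).map (fMat n A s c)).prod
      = (Umat n A s)⁻¹ * (Umat n A s * ((List.finRange n).map (fMat n A s c)).prod) := by
        rw [← mul_assoc, hinv, one_mul]
    _ = (-c) • ((Umat n A s)⁻¹ * (Umat n A s)ᵀ) := by
        rw [h1, Matrix.mul_smul]

end
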